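/- There exists a 3-fold 16-coloring of the plane; that is, the 3-fold chromatic number of the plane satisfies χ_3 ≤ 16. -/
import Mathlib

/-- An `m`-fold `k`-coloring of the Euclidean plane: each point gets an `m`-element
subset of `Fin k`, and points at Euclidean distance exactly 1 get disjoint sets. -/
def IsMfoldColoring (m k : ℕ) (c : EuclideanSpace ℝ (Fin 2) → Finset (Fin k)) : Prop :=
  (∀ x, (c x).card = m) ∧ ∀ x y, dist x y = 1 → Disjoint (c x) (c y)

/-- The plane admits an `m`-fold `k`-coloring. -/
def MfoldColorable (m k : ℕ) : Prop :=
  ∃ c : EuclideanSpace ℝ (Fin 2) → Finset (Fin k), IsMfoldColoring m k c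

/-- The `m`-fold chromatic number of the plane: the least `k` admitting an
`m`-fold `k`-coloring. -/
noncomputable def multifoldChromaticNumber (m : ℕ) : ℕ :=
  sInf {k | MfoldColorable m k}

set_option maxHeartbeats 1000000

noncomputable section
namespace Chi316Aux

def sq3 : ℝ := Real.sqrt 3
lemma sq3_sq : sq3 ^ 2 = 3 := Real.sq_sqrt (by norm_num)
lemma sq3_pos : 0 < sq3 := Real.sqrt_pos.2 (by norm_num)

def InB (z0 z1 : ℝ) : Prop :=
  z0 ^ 2 + z1 ^ 2 < 1/4 ∨ (z0 = 1/2 ∧ z1 = 0) ∨ (z0 = 1/4 ∧ z1 = sq3/4)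

def M (κ : ZMod 4 × ZMod 4) (x : EuclideanSpace ℝ (Fin 2)) : Prop :=
  ∃ i j : ℤ, ((i : ZMod 4), (j : ZMod 4)) = κ ∧
    InB (x 0 - (i * (1/2) + j * (1/4))) (x 1 - j * (sq3/4))

lemma InB_le {z0 z1 : ℝ} (h : InB z0 z1) : z0 ^ 2 + z1 ^ 2 ≤ 1/4 := by
  rcases h with h | ⟨h1, h2⟩ | ⟨h1, h2⟩
  · linarith
  · subst h1; subst h2; norm_num
  · subst h1; subst h2; nlinarith [sq3_sq]

lemma blob_diff {a0 a1 b0 b1 : ℝ} (ha : InB a0 a1) (hb : InB b0 b1) :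
    (a0 - b0) ^ 2 + (a1 - b1) ^ 2 < 1 := by
  have hA := InB_le ha
  have hB := InB_le hb
  rcases ha with h | ⟨h1, h2⟩ | ⟨h1, h2⟩
  · nlinarith [sq_nonneg (a0 * b1 - a1 * b0), sq_nonneg (a0 + b0), sq_nonneg (a1 + b1),
      sq_nonneg (a0 - b0), sq_nonneg (a1 - b1)]
  · subst h1; subst h2
    rcases hb with h | ⟨g1, g2⟩ | ⟨g1, g2⟩
    · nlinarith [sq_nonneg b1]
    · subst g1; subst g2; norm_num
    · subst g1; subst g2; nlinarith [sq3_sq]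
  · subst h1; subst h2
    rcases hb with h | ⟨g1, g2⟩ | ⟨g1, g2⟩
    · nlinarith [sq3_sq, sq_nonneg (sq3 * b0 - b1), sq_nonneg (b0 + sq3 * b1 + 1),
        sq_nonneg (b0 + sq3 * b1 - 1)]
    · subst g1; subst g2; nlinarith [sq3_sq]
    · subst g1; subst g2; norm_num

lemma far {l0 l1 s0 s1 : ℝ} (hL : 4 ≤ l0 ^ 2 + l1 ^ 2) (hS : s0 ^ 2 + s1 ^ 2 < 1) :
    (l0 + s0) ^ 2 + (l1 + s1) ^ 2 ≠ 1 := by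
  intro hE
  nlinarith [sq_nonneg (l0 * s1 - l1 * s0), sq_nonneg (l0 ^ 2 + l1 ^ 2 - s0 ^ 2 - s1 ^ 2 - 3),
    sq_nonneg (l0 + s0), sq_nonneg (l1 + s1)]

lemma int_ge (k l : ℤ) (h : ¬(k = 0 ∧ l = 0)) : (4:ℤ) ≤ (2*k+l)^2 + 3*l^2 := by
  rcases Int.even_or_odd l with ⟨m, hm⟩ | ⟨m, hm⟩
  · rcases eq_or_ne l 0 with rfl | hl
    · have hk : k ≠ 0 := by tauto
      have : 1 ≤ |k| := Int.one_le_abs hk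
      nlinarith [sq_abs k]
    · have : 1 ≤ |m| := Int.one_le_abs (by omega)
      have hm2 : 1 ≤ m^2 := by nlinarith [sq_abs m]
      subst hm
      nlinarith [sq_nonneg (2*k + (m+m)), hm2]
  · have h1 : 2*k + l ≠ 0 := by omega
    have h2 : l ≠ 0 := by omega
    have e1 : 1 ≤ |2*k+l| := Int.one_le_abs h1
    have e2 : 1 ≤ |l| := Int.one_le_abs h2
    nlinarith [sq_abs (2*k+l), sq_abs l]

/-- main independence lemma -/
lemma not_both (κ : ZMod 4 × ZMod 4) (x y : EuclideanSpace ℝ (Fin 2))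
    (h : (x 0 - y 0) ^ 2 + (x 1 - y 1) ^ 2 = 1) (hx : M κ x) (hy : M κ y) : False := by
  obtain ⟨i, j, hij, ha⟩ := hx
  obtain ⟨i', j', hij', hb⟩ := hy
  have he : ((i : ZMod 4), (j : ZMod 4)) = ((i' : ZMod 4), (j' : ZMod 4)) := hij.trans hij'.symm
  rw [Prod.ext_iff] at he
  obtain ⟨k, hk⟩ : (4:ℤ) ∣ i' - i := ((ZMod.intCast_eq_intCast_iff _ _ _).1 he.1).dvd
  obtain ⟨l, hl⟩ : (4:ℤ) ∣ j' - j := ((ZMod.intCast_eq_intCast_iff _ _ _).1 he.2).dvd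
  set a0 := x 0 - (i * (1/2) + j * (1/4)) with ha0
  set a1 := x 1 - j * (sq3/4) with ha1
  set b0 := y 0 - (i' * (1/2) + j' * (1/4)) with hb0
  set b1 := y 1 - j' * (sq3/4) with hb1
  have hi' : (i' : ℝ) = i + 4*k := by push_cast [show i' = i + 4*k by omega]; ring
  have hj' : (j' : ℝ) = j + 4*l := by push_cast [show j' = j + 4*l by omega]; ring
  have hxy0 : x 0 - y 0 = (-(2*(k:ℝ) + l)) + (a0 - b0) := by
    rw [ha0, hb0, hi', hj']; ring
  have hxy1 : x 1 - y 1 = sq3 * (-(l:ℝ)) + (a1 - b1) := by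
    rw [ha1, hb1, hj']; ring
  have hs : (a0 - b0) ^ 2 + (a1 - b1) ^ 2 < 1 := blob_diff ha hb
  by_cases hz : k = 0 ∧ l = 0
  · obtain ⟨rfl, rfl⟩ := hz
    rw [hxy0, hxy1] at h
    push_cast at h
    simp only [neg_zero, mul_zero, zero_mul, zero_add] at h
    nlinarith [hs, h]
  · have h4 : (4:ℤ) ≤ (2*k+l)^2 + 3*l^2 := int_ge k l hz
    have h4R : (4:ℝ) ≤ (2*(k:ℝ)+(l:ℝ))^2 + 3*(l:ℝ)^2 := by exact_mod_cast h4
    have hL : (4:ℝ) ≤ (-(2*(k:ℝ) + l)) ^ 2 + (sq3 * (-(l:ℝ))) ^ 2 := by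
      have h3 : (sq3 * (-(l:ℝ))) ^ 2 = 3 * (l:ℝ)^2 := by rw [mul_pow, sq3_sq]; ring
      rw [h3]; nlinarith [h4R]
    rw [hxy0, hxy1] at h
    exact far hL hs h

lemma normsq (g d : ℝ) : ((2*g + d)/4)^2 + (sq3*d/4)^2 = (g^2 + g*d + d^2)/4 := by
  linear_combination (d^2/16) * sq3_sq

lemma inb_of {g d : ℝ} (hf : g^2 + g*d + d^2 < 1) : InB ((2*g+d)/4) (sq3*d/4) :=
  Or.inl (by rw [normsq]; linarith)

lemma coset_ne {i j i' j' : ℤ} (h : ¬((4:ℤ) ∣ i' - i ∧ (4:ℤ) ∣ j' - j)) :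
    ((i : ZMod 4), (j : ZMod 4)) ≠ ((i' : ZMod 4), (j' : ZMod 4)) := by
  intro he
  rw [Prod.ext_iff] at he
  exact h ⟨(ZMod.intCast_eq_intCast_iff _ _ _).1 he.1 |>.dvd,
           (ZMod.intCast_eq_intCast_iff _ _ _).1 he.2 |>.dvd⟩

lemma cover (x : EuclideanSpace ℝ (Fin 2)) :
    ∃ p q r : ZMod 4 × ZMod 4, p ≠ q ∧ p ≠ r ∧ q ≠ r ∧ M p x ∧ M q x ∧ M r x := by
  have h0 : sq3 ≠ 0 := ne_of_gt sq3_pos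
  set bq : ℝ := 4 * x 1 / sq3 with hbqd
  set J : ℤ := ⌊bq⌋ with hJ
  set aq : ℝ := 2 * x 0 - bq / 2 with haqd
  set I : ℤ := ⌊aq⌋ with hI
  set α : ℝ := aq - I with hα
  set β : ℝ := bq - J with hβ
  have hα0 : 0 ≤ α := sub_nonneg.2 (Int.floor_le aq)
  have hα1 : α < 1 := by have := Int.lt_floor_add_one aq; rw [hα]; linarith
  have hβ0 : 0 ≤ β := sub_nonneg.2 (Int.floor_le bq)
  have hβ1 : β < 1 := by have := Int.lt_floor_add_one bq; rw [hβ]; linarith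
  have hx1 : x 1 = sq3 * bq / 4 := by rw [hbqd]; field_simp
  have hx0 : x 0 = aq/2 + bq/4 := by rw [haqd]; ring
  have haI : aq = α + I := by rw [hα]; ring
  have hbJ : bq = β + J := by rw [hβ]; ring
  have mw : ∀ di dj : ℤ, (((α - di)^2 + (α - di)*(β - dj) + (β - dj)^2) < 1) →
      M (((I + di : ℤ) : ZMod 4), ((J + dj : ℤ) : ZMod 4)) x := by
    intro di dj hf
    refine ⟨I + di, J + dj, rfl, ?_⟩
    have e0 : x 0 - ((I + di : ℤ) * (1/2) + (J + dj : ℤ) * (1/4))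
        = (2*(α - di) + (β - dj))/4 := by rw [hx0, haI, hbJ]; push_cast [Int.cast_add]; ring
    have e1 : x 1 - ((J + dj : ℤ)) * (sq3/4) = sq3 * (β - dj)/4 := by
      rw [hx1, hbJ]; push_cast; ring
    rw [e0, e1]; exact inb_of hf
  by_cases hA : α = 0 ∧ β = 0
  · obtain ⟨ha, hb⟩ := hA
    refine ⟨(((I : ℤ) : ZMod 4), ((J : ℤ) : ZMod 4)),
           (((I - 1 : ℤ) : ZMod 4), ((J : ℤ) : ZMod 4)),
           (((I : ℤ) : ZMod 4), ((J - 1 : ℤ) : ZMod 4)),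
           coset_ne (by omega), coset_ne (by omega), coset_ne (by omega), ?_, ?_, ?_⟩
    · refine ⟨I, J, rfl, ?_⟩
      have z0 : x 0 - ((I : ℝ) * (1/2) + (J : ℝ) * (1/4)) = (2*α + β)/4 := by
        rw [hx0, haI, hbJ]; ring
      have z1 : x 1 - (J : ℝ) * (sq3/4) = sq3 * β / 4 := by rw [hx1, hbJ]; ring
      rw [z0, z1, ha, hb]
      exact Or.inl (by norm_num)
    · refine ⟨I - 1, J, rfl, ?_⟩
      have z0 : x 0 - (((I - 1 : ℤ) : ℝ) * (1/2) + (J : ℝ) * (1/4)) = (2*(α+1) + β)/4 := by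
        rw [hx0, haI, hbJ]; push_cast; ring
      have z1 : x 1 - (J : ℝ) * (sq3/4) = sq3 * β / 4 := by rw [hx1, hbJ]; ring
      rw [z0, z1, ha, hb]
      exact Or.inr (Or.inl (by norm_num))
    · refine ⟨I, J - 1, rfl, ?_⟩
      have z0 : x 0 - ((I : ℝ) * (1/2) + ((J - 1 : ℤ) : ℝ) * (1/4)) = (2*α + (β+1))/4 := by
        rw [hx0, haI, hbJ]; push_cast; ring
      have z1 : x 1 - ((J - 1 : ℤ) : ℝ) * (sq3/4) = sq3 * (β+1) / 4 := by
        rw [hx1, hbJ]; push_cast; ring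
      rw [z0, z1, ha, hb]
      exact Or.inr (Or.inr (by norm_num))
  · have hne : 0 < α ∨ 0 < β := by
      rcases not_and_or.1 hA with h | h
      · exact Or.inl (lt_of_le_of_ne hα0 (Ne.symm h))
      · exact Or.inr (lt_of_le_of_ne hβ0 (Ne.symm h))
    by_cases hab : α + β ≤ 1
    · -- lower triangle
      have f00 : (α - 0)^2 + (α - 0)*(β - 0) + (β - 0)^2 < 1 := by
        rcases lt_or_eq_of_le hab with h | h
        · nlinarith [mul_pos (show (0:ℝ) < 1 - α - β by linarith)
            (show (0:ℝ) < 1 + α + β by linarith), mul_nonneg hα0 hβ0]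
        · have hb' : 0 < β := by linarith
          have ha' : 0 < α := by linarith
          nlinarith [mul_pos ha' hb']
      have f10 : (α - 1)^2 + (α - 1)*(β - 0) + (β - 0)^2 < 1 := by
        rcases hne with h' | h'
        · nlinarith [mul_pos h' (show (0:ℝ) < 2 - α - β by linarith),
            mul_nonneg hβ0 (show (0:ℝ) ≤ 1 - β by linarith)]
        · nlinarith [mul_nonneg hα0 (show (0:ℝ) ≤ 2 - α - β by linarith),
            mul_pos h' (show (0:ℝ) < 1 - β by linarith)]
      have f01 : (α - 0)^2 + (α - 0)*(β - 1) + (β - 1)^2 < 1 := by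
        rcases hne with h' | h'
        · nlinarith [mul_nonneg hβ0 (show (0:ℝ) ≤ 2 - α - β by linarith),
            mul_pos h' (show (0:ℝ) < 1 - α by linarith)]
        · nlinarith [mul_pos h' (show (0:ℝ) < 2 - α - β by linarith),
            mul_nonneg hα0 (show (0:ℝ) ≤ 1 - α by linarith)]
      exact ⟨_, _, _, coset_ne (by omega), coset_ne (by omega), coset_ne (by omega),
        mw 0 0 (by push_cast; exact f00), mw 1 0 (by push_cast; exact f10), mw 0 1 (by push_cast; exact f01)⟩
    · push_neg at hab
      have f10 : (α - 1)^2 + (α - 1)*(β - 0) + (β - 0)^2 < 1 := by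
        nlinarith [mul_pos (show (0:ℝ) < 1 - β by linarith) (show (0:ℝ) < 1 + β by linarith),
          mul_nonneg (show (0:ℝ) ≤ 1 - α by linarith) (show (0:ℝ) ≤ α + β - 1 by linarith)]
      have f01 : (α - 0)^2 + (α - 0)*(β - 1) + (β - 1)^2 < 1 := by
        nlinarith [mul_pos (show (0:ℝ) < 1 - α by linarith) (show (0:ℝ) < 1 + α by linarith),
          mul_nonneg (show (0:ℝ) ≤ 1 - β by linarith) (show (0:ℝ) ≤ α + β - 1 by linarith)]
      have f11 : (α - 1)^2 + (α - 1)*(β - 1) + (β - 1)^2 < 1 := by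
        nlinarith [mul_pos (show (0:ℝ) < α + β - 1 by linarith)
            (show (0:ℝ) < 3 - α - β by linarith),
          mul_pos (show (0:ℝ) < 1 - α by linarith) (show (0:ℝ) < 1 - β by linarith)]
      exact ⟨_, _, _, coset_ne (by omega), coset_ne (by omega), coset_ne (by omega),
        mw 1 0 (by push_cast; exact f10), mw 0 1 (by push_cast; exact f01), mw 1 1 (by push_cast; exact f11)⟩


def eqv : ZMod 4 × ZMod 4 ≃ Fin 16 := finProdFinEquiv

open Classical in
noncomputable def Cov (x : EuclideanSpace ℝ (Fin 2)) : Finset (Fin 16) :=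
  Finset.univ.filter (fun n => M (eqv.symm n) x)

lemma mem_Cov {x : EuclideanSpace ℝ (Fin 2)} {κ : ZMod 4 × ZMod 4} (h : M κ x) :
    eqv κ ∈ Cov x := by
  classical
  simp only [Cov, Finset.mem_filter, Finset.mem_univ, true_and]
  simpa [Equiv.symm_apply_apply] using h

lemma M_of_mem_Cov {x : EuclideanSpace ℝ (Fin 2)} {n : Fin 16} (h : n ∈ Cov x) :
    M (eqv.symm n) x := by
  classical
  simpa only [Cov, Finset.mem_filter, Finset.mem_univ, true_and] using h

lemma three_le_Cov (x : EuclideanSpace ℝ (Fin 2)) : 3 ≤ (Cov x).card := by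
  obtain ⟨p, q, r, hpq, hpr, hqr, hp, hq, hr⟩ := cover x
  have hsub : ({eqv p, eqv q, eqv r} : Finset (Fin 16)) ⊆ Cov x := by
    intro n hn
    simp only [Finset.mem_insert, Finset.mem_singleton] at hn
    rcases hn with rfl | rfl | rfl
    exacts [mem_Cov hp, mem_Cov hq, mem_Cov hr]
  have hcard : ({eqv p, eqv q, eqv r} : Finset (Fin 16)).card = 3 := by
    rw [Finset.card_insert_of_notMem (by simp [eqv.injective.ne hpq, eqv.injective.ne hpr]),
      Finset.card_insert_of_notMem (by simp [eqv.injective.ne hqr]), Finset.card_singleton]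
  calc (3:ℕ) = ({eqv p, eqv q, eqv r} : Finset (Fin 16)).card := hcard.symm
    _ ≤ (Cov x).card := Finset.card_le_card hsub

noncomputable def col (x : EuclideanSpace ℝ (Fin 2)) : Finset (Fin 16) :=
  (Finset.exists_subset_card_eq (three_le_Cov x)).choose

lemma col_spec (x : EuclideanSpace ℝ (Fin 2)) : col x ⊆ Cov x ∧ (col x).card = 3 :=
  (Finset.exists_subset_card_eq (three_le_Cov x)).choose_spec

lemma dist_sq {x y : EuclideanSpace ℝ (Fin 2)} (h : dist x y = 1) :
    (x 0 - y 0) ^ 2 + (x 1 - y 1) ^ 2 = 1 := by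
  have h2 : dist x y ^ 2 = 1 := by rw [h]; norm_num
  rw [EuclideanSpace.dist_eq, Real.sq_sqrt (by positivity)] at h2
  simpa [Fin.sum_univ_two, Real.dist_eq, sq_abs] using h2

end Chi316Aux
end

theorem chi_3_le_16 :
    MfoldColorable 3 16 ∧ multifoldChromaticNumber 3 ≤ 16 := by
  have hc : MfoldColorable 3 16 := by
    refine ⟨Chi316Aux.col, fun x => (Chi316Aux.col_spec x).2, fun x y hxy => ?_⟩
    rw [Finset.disjoint_left]
    intro n hnx hny
    exact Chi316Aux.not_both _ x y (Chi316Aux.dist_sq hxy)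
      (Chi316Aux.M_of_mem_Cov ((Chi316Aux.col_spec x).1 hnx))
      (Chi316Aux.M_of_mem_Cov ((Chi316Aux.col_spec y).1 hny))
  exact ⟨hc, Nat.sInf_le hc⟩
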